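/- For all points z, z′ in the hyperbolic upper half-plane ℍ, every real number ξ, and every sequence (w_n) in ℍ such that (w_n : ℂ) → (ξ : ℂ), the sequence dist(z, w_n) − dist(z′, w_n) converges, with limit log(|(z:ℂ) − ξ|² / Im z) − log(|(z′:ℂ) − ξ|² / Im z′). -/

import Mathlib

open Filter Topology

lemma busemann_aux (x t : ℝ) (hx : 0 ≤ x) (ht : 0 < t) :
    2 * Real.arsinh (x / t) = 2 * Real.log (x + Real.sqrt (x ^ 2 + t ^ 2)) - 2 * Real.log t := by
  have ht' : t ≠ 0 := ne_of_gt ht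
  have h1 : 1 + (x / t) ^ 2 = (x ^ 2 + t ^ 2) / t ^ 2 := by field_simp; ring
  have h2 : Real.sqrt ((x ^ 2 + t ^ 2) / t ^ 2) = Real.sqrt (x ^ 2 + t ^ 2) / t := by
    rw [Real.sqrt_div (by positivity), Real.sqrt_sq ht.le]
  have h3 : x / t + Real.sqrt (x ^ 2 + t ^ 2) / t = (x + Real.sqrt (x ^ 2 + t ^ 2)) / t :=
    (add_div _ _ _).symm
  have hpos : 0 < x + Real.sqrt (x ^ 2 + t ^ 2) := by
    nlinarith [Real.sq_sqrt (show (0:ℝ) ≤ x ^ 2 + t ^ 2 by positivity),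
      Real.sqrt_nonneg (x ^ 2 + t ^ 2)]
  rw [Real.arsinh, h1, h2, h3, Real.log_div (ne_of_gt hpos) ht']
  ring

/-- For points `z z'` in the hyperbolic upper half-plane, a boundary point
`ξ ∈ ℝ`, and any sequence `w n` in the upper half-plane converging (in `ℂ`) to `ξ`,
the differences `dist z (w n) - dist z' (w n)` of hyperbolic distances converge, with
limit `log (|z - ξ|² / Im z) - log (|z' - ξ|² / Im z')`. -/
theorem busemann_limit_exists (z z' : UpperHalfPlane) (ξ : ℝ) (w : ℕ → UpperHalfPlane)
    (hw : Tendsto (fun n => ((w n : ℂ))) atTop (𝓝 (ξ : ℂ))) :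
    Tendsto (fun n => dist z (w n) - dist z' (w n)) atTop
      (𝓝 (Real.log (‖(z : ℂ) - (ξ : ℂ)‖ ^ 2 / z.im)
          - Real.log (‖(z' : ℂ) - (ξ : ℂ)‖ ^ 2 / z'.im))) := by
  -- imaginary parts tend to 0
  have him : Tendsto (fun n => (w n).im) atTop (𝓝 0) := by
    have := (Complex.continuous_im.tendsto (ξ : ℂ)).comp hw
    simpa [Function.comp_def, UpperHalfPlane.coe_im] using this
  have ht0 : Tendsto (fun n => Real.sqrt ((w n).im)) atTop (𝓝 0) := by
    simpa [Function.comp_def] using (Real.continuous_sqrt.tendsto 0).comp him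
  -- the key F-function
  set F : UpperHalfPlane → ℕ → ℝ := fun u n =>
    2 * Real.log (dist (u : ℂ) ((w n : ℂ)) / (2 * Real.sqrt u.im) +
      Real.sqrt ((dist (u : ℂ) ((w n : ℂ)) / (2 * Real.sqrt u.im)) ^ 2 +
        Real.sqrt ((w n).im) ^ 2)) with hF
  have hdist : ∀ (u : UpperHalfPlane) (n : ℕ),
      dist u (w n) = F u n - 2 * Real.log (Real.sqrt ((w n).im)) := by
    intro u n
    have hsu : 0 < Real.sqrt u.im := Real.sqrt_pos.2 u.im_pos
    have htn : 0 < Real.sqrt ((w n).im) := Real.sqrt_pos.2 (w n).im_pos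
    have hx : 0 ≤ dist (u : ℂ) ((w n : ℂ)) / (2 * Real.sqrt u.im) := by positivity
    have := busemann_aux _ _ hx htn
    rw [UpperHalfPlane.dist_eq, hF]
    have harg : dist (u : ℂ) ((w n : ℂ)) / (2 * Real.sqrt (u.im * (w n).im))
        = dist (u : ℂ) ((w n : ℂ)) / (2 * Real.sqrt u.im) / Real.sqrt ((w n).im) := by
      rw [Real.sqrt_mul u.im_pos.le, ← mul_assoc, ← div_div]
    rw [harg, ← this]
  have hFlim : ∀ u : UpperHalfPlane,
      Tendsto (fun n => F u n) atTop
        (𝓝 (Real.log (‖(u : ℂ) - (ξ : ℂ)‖ ^ 2 / u.im))) := by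
    intro u
    have hsu : 0 < Real.sqrt u.im := Real.sqrt_pos.2 u.im_pos
    have hne : ((u : ℂ) - (ξ : ℂ)) ≠ 0 := by
      intro h
      have : (u : ℂ).im = (ξ : ℂ).im := by
        have := congrArg Complex.im h
        simpa [sub_eq_zero] using sub_eq_zero.1 (by simpa using this)
      simp [UpperHalfPlane.coe_im, Complex.ofReal_im] at this
      exact (ne_of_gt u.im_pos) this
    have habs : 0 < ‖(u : ℂ) - (ξ : ℂ)‖ := by
      simpa using (norm_pos_iff.2 hne)
    set X : ℝ := ‖(u : ℂ) - (ξ : ℂ)‖ / (2 * Real.sqrt u.im) with hX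
    have hXpos : 0 < X := by positivity
    have hd : Tendsto (fun n => dist (u : ℂ) ((w n : ℂ))) atTop
        (𝓝 (‖(u : ℂ) - (ξ : ℂ)‖)) := by
      have : Tendsto (fun n => dist (u : ℂ) ((w n : ℂ))) atTop (𝓝 (dist (u : ℂ) (ξ : ℂ))) :=
        (Continuous.tendsto (continuous_const.dist continuous_id) _).comp hw
      simpa [Complex.dist_eq] using this
    have hx : Tendsto (fun n => dist (u : ℂ) ((w n : ℂ)) / (2 * Real.sqrt u.im)) atTop (𝓝 X) :=
      hd.div_const _
    have hinner : Tendsto (fun n => dist (u : ℂ) ((w n : ℂ)) / (2 * Real.sqrt u.im) +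
        Real.sqrt ((dist (u : ℂ) ((w n : ℂ)) / (2 * Real.sqrt u.im)) ^ 2 +
          Real.sqrt ((w n).im) ^ 2)) atTop (𝓝 (2 * X)) := by
      have h1 : Tendsto (fun n => (dist (u : ℂ) ((w n : ℂ)) / (2 * Real.sqrt u.im)) ^ 2 +
          Real.sqrt ((w n).im) ^ 2) atTop (𝓝 (X ^ 2 + 0 ^ 2)) :=
        (hx.pow 2).add (ht0.pow 2)
      have h2 := (Real.continuous_sqrt.tendsto _).comp h1
      have h3 : Real.sqrt (X ^ 2 + 0 ^ 2) = X := by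
        simpa using Real.sqrt_sq hXpos.le
      simp only [h3, Function.comp_def] at h2
      have := hx.add h2
      convert this using 2
      ring
    have hlog := (hinner.log (by positivity)).const_mul 2
    have heq : 2 * Real.log (2 * X) = Real.log (‖(u : ℂ) - (ξ : ℂ)‖ ^ 2 / u.im) := by
      have h2X : 2 * X = ‖(u : ℂ) - (ξ : ℂ)‖ / Real.sqrt u.im := by
        rw [hX]; field_simp
      have : (2 * X) ^ 2 = ‖(u : ℂ) - (ξ : ℂ)‖ ^ 2 / u.im := by
        rw [h2X, div_pow, Real.sq_sqrt u.im_pos.le]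
      rw [← this, Real.log_pow]
      norm_num
    rw [heq] at hlog
    exact hlog
  have heq : ∀ n, dist z (w n) - dist z' (w n) = F z n - F z' n := by
    intro n
    rw [hdist z n, hdist z' n]
    ring
  simpa [heq] using (hFlim z).sub (hFlim z')
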